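/- Let X be a Banach space with two closed linear subspaces M and N such that N is a right semi-compact perturbation of M (M ∼^{sc} N), and let m be a positive integer. Then there exist a compact linear operator K₁ ∈ B(X) with (I+K₁)^{-1} ∈ B(X), and finite-dimensional linear subspaces V of (I+K₁)M and U of N with U ∩ (I+K₁)M = {0} and V ∩ N = {0}, such that (I+K₁)M ⊕ U = N ⊕ V if [M−N] ∈ ℤ, while (I+K₁)M ⊕ U ⊆ N ⊕ V with dim U = dim V + m if [M−N] = −∞. -/

import Mathlib

open scoped Classical

/-- `μ` is a right semi-compact perturbation of `λ` (written `λ ∼^{sc} μ`):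
there is a compact operator `K ∈ B(X)` with `(I + K)λ ⊆ μ`. -/
def SCPerturb {X : Type*} [NormedAddCommGroup X] [NormedSpace ℂ X]
    (lam mu : Submodule ℂ X) : Prop :=
  ∃ K : X →L[ℂ] X, IsCompactOperator ⇑K ∧
    Submodule.map ((1 + K : X →L[ℂ] X) : X →ₗ[ℂ] X) lam ≤ mu

/-- Dimension of a module valued in `ℤ ∪ {±∞}`: the finrank if finite
dimensional, `+∞` otherwise. -/
noncomputable def edimE (V : Type*) [AddCommGroup V] [Module ℂ V] : EReal :=
  if FiniteDimensional ℂ V then ((Module.finrank ℂ V : ℝ) : EReal) else ⊤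

/-- The index of `I + K : λ → μ`, i.e.
`dim ker((I+K)|_λ) − dim(μ/(I+K)λ)`, valued in `ℤ ∪ {−∞}` (it equals `−∞`
when `dim(μ/(I+K)λ)` is infinite). -/
noncomputable def relIndexWith {X : Type*} [NormedAddCommGroup X] [NormedSpace ℂ X]
    (lam mu : Submodule ℂ X) (K : X →L[ℂ] X) : EReal :=
  edimE ↥(lam ⊓ LinearMap.ker ((1 + K : X →L[ℂ] X) : X →ₗ[ℂ] X)) -
    edimE (↥mu ⧸ (Submodule.map ((1 + K : X →L[ℂ] X) : X →ₗ[ℂ] X) lam).comap mu.subtype)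

/-- The relative dimension `[λ − μ]`, defined via any compact witness of
`λ ∼^{sc} μ`, or as `−[μ − λ]` (in particular `+∞` when `[μ−λ] = −∞`) if only
`μ ∼^{sc} λ` holds. -/
noncomputable def relDim {X : Type*} [NormedAddCommGroup X] [NormedSpace ℂ X]
    (lam mu : Submodule ℂ X) : EReal :=
  if h : SCPerturb lam mu then relIndexWith lam mu h.choose
  else if h' : SCPerturb mu lam then -relIndexWith mu lam h'.choose
  else 0

/-- `μ` is a compact perturbation of `λ` (written `λ ∼^{c} μ`): there is a
compact operator `K` with `(I+K)λ ⊆ μ` and `I + K : λ → μ` Fredholm. -/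
def CPerturb {X : Type*} [NormedAddCommGroup X] [NormedSpace ℂ X]
    (lam mu : Submodule ℂ X) : Prop :=
  ∃ K : X →L[ℂ] X, IsCompactOperator ⇑K ∧
    Submodule.map ((1 + K : X →L[ℂ] X) : X →ₗ[ℂ] X) lam ≤ mu ∧
    FiniteDimensional ℂ ↥(lam ⊓ LinearMap.ker ((1 + K : X →L[ℂ] X) : X →ₗ[ℂ] X)) ∧
    FiniteDimensional ℂ
      (↥mu ⧸ (Submodule.map ((1 + K : X →L[ℂ] X) : X →ₗ[ℂ] X) lam).comap mu.subtype)

section AuxAlgebra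

open Submodule

variable {X : Type*} [AddCommGroup X] [Module ℂ X]

/-- If `D ≤ B ≤ D ⊔ G` with `G` finite dimensional, then `B/D` is finite dimensional. -/
lemma quot_fd_of_le_sup {D B G : Submodule ℂ X} (hDB : D ≤ B) (hBG : B ≤ D ⊔ G)
    [FiniteDimensional ℂ G] : FiniteDimensional ℂ (↥B ⧸ D.comap B.subtype) := by
  haveI : FiniteDimensional ℂ (↥(G ⊔ D) ⧸ comap (G ⊔ D).subtype D) := by
    have e := LinearMap.quotientInfEquivSupQuotient G D
    exact Module.Finite.equiv e
  haveI : FiniteDimensional ℂ (↥(D ⊔ G) ⧸ comap (D ⊔ G).subtype D) := by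
    rwa [sup_comm G D] at this
  -- embed B/D into (D ⊔ G)/D
  set f : ↥B →ₗ[ℂ] (↥(D ⊔ G) ⧸ comap (D ⊔ G).subtype D) :=
    (comap (D ⊔ G).subtype D).mkQ.comp (Submodule.inclusion hBG) with hf
  have hker : D.comap B.subtype ≤ LinearMap.ker f := by
    intro x hx
    simp only [hf, LinearMap.mem_ker, LinearMap.comp_apply, mkQ_apply,
      Submodule.Quotient.mk_eq_zero, mem_comap]
    exact hx
  have hker2 : LinearMap.ker f ≤ D.comap B.subtype := by
    intro x hx
    simp only [hf, LinearMap.mem_ker, LinearMap.comp_apply, mkQ_apply,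
      Submodule.Quotient.mk_eq_zero, mem_comap] at hx
    exact hx
  have hinj := Submodule.ker_liftQ_eq_bot _ f hker hker2
  exact FiniteDimensional.of_injective ((D.comap B.subtype).liftQ f hker)
    (LinearMap.ker_eq_bot.mp hinj)

/-- A finite-dimensional complement of `D` in `B` when `B/D` is finite dimensional. -/
lemma exists_compl_of_quot_fd {D B : Submodule ℂ X} (hDB : D ≤ B)
    [FiniteDimensional ℂ (↥B ⧸ D.comap B.subtype)] :
    ∃ U : Submodule ℂ X, U ≤ B ∧ FiniteDimensional ℂ U ∧ D ⊔ U = B ∧ U ⊓ D = ⊥ := by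
  obtain ⟨U', hU'⟩ := Submodule.exists_isCompl (D.comap B.subtype)
  haveI : FiniteDimensional ℂ U' :=
    Module.Finite.equiv (Submodule.quotientEquivOfIsCompl _ _ hU')
  refine ⟨U'.map B.subtype, map_subtype_le _ _, Module.Finite.map _ _, ?_, ?_⟩
  · have : (D.comap B.subtype ⊔ U').map B.subtype = B := by
      rw [hU'.sup_eq_top, Submodule.map_subtype_top]
    rw [Submodule.map_sup, map_comap_subtype, inf_eq_right.mpr hDB] at this
    exact this
  · rw [eq_bot_iff]
    rintro x ⟨hxU, hxD⟩
    obtain ⟨x', hx', rfl⟩ := hxU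
    have : x' ∈ D.comap B.subtype ⊓ U' := ⟨hxD, hx'⟩
    rw [hU'.inf_eq_bot] at this
    rw [Submodule.mem_bot] at this
    simp [this]

/-- Finite-dimensional subspaces of arbitrary finrank transverse to `D`, when `B/D` is
infinite dimensional. -/
lemma exists_findim_transverse {D B : Submodule ℂ X} (hDB : D ≤ B)
    (h : ¬ FiniteDimensional ℂ (↥B ⧸ D.comap B.subtype)) (k : ℕ) :
    ∃ U : Submodule ℂ X, U ≤ B ∧ FiniteDimensional ℂ U ∧ U ⊓ D = ⊥ ∧
      Module.finrank ℂ U = k := by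
  induction k with
  | zero => exact ⟨⊥, bot_le, inferInstance, bot_inf_eq _, finrank_bot ℂ X⟩
  | succ k ih =>
    obtain ⟨U, hUB, hUfd, hUD, hUrk⟩ := ih
    have hne : D ⊔ U ≠ B := by
      intro hEq
      refine h (quot_fd_of_le_sup (G := U) hDB ?_)
      rw [hEq]
    have hle : D ⊔ U ≤ B := sup_le hDB hUB
    obtain ⟨x, hxB, hxD⟩ : ∃ x ∈ B, x ∉ D ⊔ U := by
      by_contra hcon
      push_neg at hcon
      exact hne (le_antisymm hle hcon)
    have hx0 : x ≠ 0 := fun h0 => hxD (h0 ▸ (D ⊔ U).zero_mem)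
    have hUS : U ⊓ (ℂ ∙ x) = ⊥ := by
      rw [eq_bot_iff]
      rintro y ⟨hyU, hyS⟩
      obtain ⟨c, rfl⟩ := Submodule.mem_span_singleton.mp hyS
      rcases eq_or_ne c 0 with rfl | hc
      · simp
      · exfalso
        apply hxD
        have hx : x = c⁻¹ • (c • x) := by rw [smul_smul, inv_mul_cancel₀ hc, one_smul]
        exact Submodule.mem_sup_right (hx ▸ Submodule.smul_mem U c⁻¹ hyU)
    refine ⟨U ⊔ (ℂ ∙ x), sup_le hUB ((span_singleton_le_iff_mem _ _).mpr hxB),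
      inferInstance, ?_, ?_⟩
    · rw [eq_bot_iff]
      rintro y ⟨hyU, hyD⟩
      obtain ⟨u, hu, z, hz, rfl⟩ := mem_sup.mp hyU
      obtain ⟨c, rfl⟩ := Submodule.mem_span_singleton.mp hz
      rcases eq_or_ne c 0 with rfl | hc
      · have : u ∈ U ⊓ D := ⟨hu, by simpa using hyD⟩
        rw [hUD] at this
        simpa using this
      · exfalso
        apply hxD
        have hx : x = c⁻¹ • ((u + c • x) - u) := by
          rw [add_sub_cancel_left, smul_smul, inv_mul_cancel₀ hc, one_smul]
        rw [hx]
        exact Submodule.smul_mem _ _ (Submodule.sub_mem _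
          (Submodule.mem_sup_left hyD) (Submodule.mem_sup_right hu))
    · have hrk := Submodule.finrank_sup_add_finrank_inf_eq U (ℂ ∙ x)
      rw [hUS] at hrk
      rw [finrank_span_singleton hx0, hUrk] at hrk
      simpa using hrk

lemma quot_inf_fd {A B G : Submodule ℂ X} (h : B ≤ A ⊔ G) [FiniteDimensional ℂ G] :
    FiniteDimensional ℂ (↥B ⧸ (A ⊓ B).comap B.subtype) := by
  haveI h1 : FiniteDimensional ℂ (↥(B ⊔ A) ⧸ A.comap (B ⊔ A).subtype) :=
    quot_fd_of_le_sup (D := A) (B := B ⊔ A) (G := G) le_sup_right (sup_le h le_sup_left)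
  have e := LinearMap.quotientInfEquivSupQuotient B A
  rw [inf_comm A B]
  exact Module.Finite.equiv e.symm


end AuxAlgebra

section AuxRiesz

open Submodule Filter Topology Metric

variable {X : Type*} [NormedAddCommGroup X] [NormedSpace ℂ X]

/-- Kernel of `1 + C` is finite dimensional for compact `C`. -/
lemma ker_fd_of_compact {C : X →L[ℂ] X} (hC : IsCompactOperator ⇑C) :
    FiniteDimensional ℂ ↥(LinearMap.ker ((1 + C : X →L[ℂ] X) : X →ₗ[ℂ] X)) := by
  set W := LinearMap.ker ((1 + C : X →L[ℂ] X) : X →ₗ[ℂ] X) with hW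
  have hWc : IsClosed (W : Set X) := ContinuousLinearMap.isClosed_ker _
  have hCneg : IsCompactOperator ⇑(-C) := by
    have := hC.neg
    rwa [show -⇑C = ⇑(-C) by ext x; simp] at this
  have hcpt : IsCompact (closure (⇑(-C) '' closedBall 0 1)) :=
    hCneg.isCompact_closure_image_closedBall 1
  have hsub : (W : Set X) ∩ closedBall 0 1 ⊆ closure (⇑(-C) '' closedBall 0 1) := by
    rintro x ⟨hxW, hxB⟩
    have hx : (1 + C) x = 0 := hxW
    have : x = (-C) x := by
      simp only [ContinuousLinearMap.add_apply, ContinuousLinearMap.one_apply] at hx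
      rw [ContinuousLinearMap.neg_apply]
      exact eq_neg_of_add_eq_zero_left hx
    exact subset_closure ⟨x, hxB, this.symm⟩
  have hcl : IsCompact ((W : Set X) ∩ closedBall 0 1) :=
    IsCompact.of_isClosed_subset hcpt (hWc.inter isClosed_closedBall) hsub
  have hball : IsCompact (closedBall (0 : ↥W) 1) := by
    rw [Subtype.isCompact_iff]
    have : (Subtype.val '' closedBall (0 : ↥W) 1) = (W : Set X) ∩ closedBall 0 1 := by
      ext x
      constructor
      · rintro ⟨⟨y, hy⟩, hball, rfl⟩
        refine ⟨hy, ?_⟩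
        simpa [Metric.mem_closedBall, dist_eq_norm] using hball
      · rintro ⟨hxW, hxB⟩
        refine ⟨⟨x, hxW⟩, ?_, rfl⟩
        simpa [Metric.mem_closedBall, dist_eq_norm] using hxB
    rw [this]
    exact hcl
  exact FiniteDimensional.of_isCompact_closedBall₀ ℂ one_pos hball

/-- Powers of `1 + K` are again of the form `1 + compact`. -/
lemma pow_one_add_compact {K : X →L[ℂ] X} (hK : IsCompactOperator ⇑K) (n : ℕ) :
    ∃ C : X →L[ℂ] X, IsCompactOperator ⇑C ∧ (1 + K) ^ n = 1 + C := by
  induction n with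
  | zero => exact ⟨0, isCompactOperator_zero, by simp⟩
  | succ n ih =>
    obtain ⟨C, hC, hCeq⟩ := ih
    refine ⟨K + C * (1 + K), ?_, ?_⟩
    · have h1 : IsCompactOperator (⇑C ∘ ⇑(1 + K)) := hC.comp_clm (1 + K)
      have h2 : IsCompactOperator (⇑K + ⇑C ∘ ⇑(1 + K)) := hK.add h1
      have h3 : ⇑(K + C * (1 + K) : X →L[ℂ] X) = ⇑K + ⇑C ∘ ⇑(1 + K) := by
        ext x
        simp [ContinuousLinearMap.mul_apply]
      rw [← h3] at h2
      exact h2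
    · rw [pow_succ, hCeq]
      noncomm_ring

lemma range_closed_of_compact [CompleteSpace X] {C : X →L[ℂ] X}
    (hC : IsCompactOperator ⇑C) :
    IsClosed ((LinearMap.range ((1 + C : X →L[ℂ] X) : X →ₗ[ℂ] X) : Submodule ℂ X) : Set X) := by
  set T := (1 + C : X →L[ℂ] X) with hT
  set W := LinearMap.ker (T : X →ₗ[ℂ] X) with hWdef
  haveI hWfd : FiniteDimensional ℂ ↥W := ker_fd_of_compact hC
  obtain ⟨P, hPc, hPcompl⟩ :=
    (Submodule.ClosedComplemented.of_finiteDimensional W).exists_isClosed_isCompl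
  have hbdd : ∃ c : ℝ, 0 < c ∧ ∀ x ∈ P, c * ‖x‖ ≤ ‖T x‖ := by
    by_contra hcon
    push_neg at hcon
    have hseq : ∀ n : ℕ, ∃ z : X, z ∈ P ∧ ‖z‖ = 1 ∧ ‖T z‖ < 1 / (n + 1) := by
      intro n
      obtain ⟨x, hxP, hx⟩ := hcon (1 / (n + 1) : ℝ) (by positivity)
      have hx0 : x ≠ 0 := by
        rintro rfl
        simp at hx
      have hnx : (0:ℝ) < ‖x‖ := norm_pos_iff.mpr hx0
      refine ⟨((‖x‖⁻¹ : ℝ) : ℂ) • x, P.smul_mem _ hxP, ?_, ?_⟩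
      · rw [norm_smul, Complex.norm_real, norm_inv, Real.norm_eq_abs, abs_of_pos hnx,
          inv_mul_cancel₀ hnx.ne']
      · rw [map_smul, norm_smul, Complex.norm_real, norm_inv, Real.norm_eq_abs, abs_of_pos hnx]
        calc ‖x‖⁻¹ * ‖T x‖ < ‖x‖⁻¹ * (1 / (n + 1) * ‖x‖) := by
              exact mul_lt_mul_of_pos_left hx (by positivity)
          _ = 1 / (n + 1) := by field_simp
    choose z hzP hz1 hzT using hseq
    have hcpt := hC.isCompact_closure_image_closedBall 1
    have hmem : ∀ n, C (z n) ∈ closure (⇑C '' closedBall 0 1) := fun n =>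
      subset_closure ⟨z n, by simp [Metric.mem_closedBall, dist_eq_norm, hz1 n], rfl⟩
    obtain ⟨y, _, φ, hφ, hconv⟩ := hcpt.tendsto_subseq hmem
    have hTz : Tendsto (fun n => T (z (φ n))) atTop (𝓝 0) := by
      apply squeeze_zero_norm (a := fun n : ℕ => 1 / (n + 1 : ℝ))
      · intro n
        refine le_trans (hzT (φ n)).le ?_
        apply one_div_le_one_div_of_le (by positivity)
        have : (n : ℝ) ≤ (φ n : ℝ) := by exact_mod_cast hφ.le_apply
        linarith
      · exact tendsto_one_div_add_atTop_nhds_zero_nat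
    have hzconv : Tendsto (fun n => z (φ n)) atTop (𝓝 (-y)) := by
      have heq : (fun n => z (φ n)) = fun n => T (z (φ n)) - C (z (φ n)) := by
        funext n
        rw [hT]
        simp
      rw [heq]
      have := hTz.sub hconv
      simpa using this
    have hyP : -y ∈ P := hPc.mem_of_tendsto hzconv (Eventually.of_forall fun n => hzP (φ n))
    have hy1 : ‖y‖ = 1 := by
      have h1 : Tendsto (fun n => ‖z (φ n)‖) atTop (𝓝 ‖-y‖) := hzconv.norm
      simp only [hz1, norm_neg] at h1
      exact (tendsto_nhds_unique h1 tendsto_const_nhds)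
    have hTy : T (-y) = 0 := by
      have h1 : Tendsto (fun n => T (z (φ n))) atTop (𝓝 (T (-y))) :=
        (T.continuous.tendsto _).comp hzconv
      exact tendsto_nhds_unique h1 hTz
    have hmem2 : -y ∈ W ⊓ P := ⟨hTy, hyP⟩
    rw [hPcompl.inf_eq_bot, Submodule.mem_bot] at hmem2
    rw [← norm_neg y, hmem2, norm_zero] at hy1
    norm_num at hy1
  obtain ⟨c, hc0, hc⟩ := hbdd
  haveI hcs : CompleteSpace ↥P := hPc.completeSpace_coe
  set f := T.comp P.subtypeL with hf
  have hanti : AntilipschitzWith (⟨c, hc0.le⟩ : NNReal)⁻¹ f := by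
    apply ContinuousLinearMap.antilipschitz_of_bound
    intro x
    have h1 := hc (x : X) x.2
    have h2 : ‖f x‖ = ‖T (x : X)‖ := rfl
    have h3 : ‖x‖ = ‖(x : X)‖ := rfl
    have hco : (((⟨c, hc0.le⟩ : NNReal)⁻¹ : NNReal) : ℝ) = c⁻¹ := by
      exact NNReal.coe_inv _
    rw [h2, h3, hco]
    rw [le_inv_mul_iff₀ hc0]
    exact h1
  have hrange : Set.range ⇑f = ⇑T '' (P : Set X) := by
    rw [hf, ContinuousLinearMap.coe_comp', Set.range_comp]
    congr 1
    ext y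
    simp
  have hclosed_img : IsClosed (⇑T '' (P : Set X)) := by
    rw [← hrange]
    exact hanti.isClosed_range f.uniformContinuous
  have hset : ((LinearMap.range (T : X →ₗ[ℂ] X) : Submodule ℂ X) : Set X) = ⇑T '' (P : Set X) := by
    apply Set.Subset.antisymm
    · rintro x ⟨v, rfl⟩
      have hv : v ∈ W ⊔ P := by rw [hPcompl.sup_eq_top]; trivial
      obtain ⟨w, hw, p, hp, rfl⟩ := mem_sup.mp hv
      refine ⟨p, hp, ?_⟩
      have hw0 : T w = 0 := hw
      rw [map_add, ContinuousLinearMap.coe_coe, hw0, zero_add]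
    · rintro x ⟨p, hp, rfl⟩
      exact ⟨p, rfl⟩
  rw [hT] at hset ⊢
  rw [hset]
  exact hclosed_img

/-- Riesz-lemma style: a norm-one vector in `E` at distance `≥ 1/2` from `F`. -/
lemma exists_norm_one_half_dist {E F : Submodule ℂ X} (hFE : F ≤ E)
    (hFc : IsClosed (F : Set X)) (hne : ∃ x, x ∈ E ∧ x ∉ F) :
    ∃ z : X, z ∈ E ∧ ‖z‖ = 1 ∧ ∀ y ∈ F, 1 / 2 ≤ ‖z - y‖ := by
  set F' : Submodule ℂ ↥E := F.comap E.subtype with hF'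
  have hF'c : IsClosed (F' : Set ↥E) := by
    have : (F' : Set ↥E) = (Subtype.val) ⁻¹' (F : Set X) := rfl
    rw [this]
    exact hFc.preimage continuous_subtype_val
  have hex : ∃ x : ↥E, x ∉ F' := by
    obtain ⟨x, hxE, hxF⟩ := hne
    exact ⟨⟨x, hxE⟩, hxF⟩
  obtain ⟨x₀, hx₀F, hx₀⟩ := riesz_lemma hF'c hex (by norm_num : (1:ℝ)/2 < 1)
  have hx₀0 : x₀ ≠ 0 := fun h => hx₀F (h ▸ F'.zero_mem)
  have hnpos : (0:ℝ) < ‖x₀‖ := norm_pos_iff.mpr hx₀0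
  refine ⟨((‖x₀‖⁻¹ : ℝ) : ℂ) • (x₀ : X), E.smul_mem _ x₀.2, ?_, ?_⟩
  · have hco : ‖(x₀ : X)‖ = ‖x₀‖ := rfl
    rw [norm_smul, Complex.norm_real, norm_inv, Real.norm_eq_abs, abs_of_pos hnpos, hco,
      inv_mul_cancel₀ hnpos.ne']
  · intro y hy
    have hyE : y ∈ E := hFE hy
    have hmem : ((‖x₀‖ : ℝ) : ℂ) • (⟨y, hyE⟩ : ↥E) ∈ F' := by
      show ((‖x₀‖ : ℝ) : ℂ) • y ∈ F
      exact F.smul_mem _ hy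
    have h12 := hx₀ _ hmem
    have heq : ((‖x₀‖⁻¹ : ℝ) : ℂ) • (x₀ : X) - y
        = ((‖x₀‖⁻¹ : ℝ) : ℂ) • ((x₀ : X) - ((‖x₀‖ : ℝ) : ℂ) • y) := by
      rw [smul_sub, smul_smul]
      congr 1
      have : ((‖x₀‖⁻¹ : ℝ) : ℂ) * ((‖x₀‖ : ℝ) : ℂ) = 1 := by
        rw [← Complex.ofReal_mul, inv_mul_cancel₀ hnpos.ne']
        exact Complex.ofReal_one
      rw [this, one_smul]
    rw [heq, norm_smul, Complex.norm_real, norm_inv, Real.norm_eq_abs, abs_of_pos hnpos]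
    have hnorm : ‖(x₀ : X) - ((‖x₀‖ : ℝ) : ℂ) • y‖
        = ‖x₀ - ((‖x₀‖ : ℝ) : ℂ) • (⟨y, hyE⟩ : ↥E)‖ := rfl
    rw [hnorm]
    calc (1:ℝ)/2 = ‖x₀‖⁻¹ * (1/2 * ‖x₀‖) := by
          have h0 : (0:ℝ) < ‖(x₀ : X)‖ := hnpos
          field_simp
      _ ≤ ‖x₀‖⁻¹ * ‖x₀ - ((‖x₀‖ : ℝ) : ℂ) • (⟨y, hyE⟩ : ↥E)‖ := by
          apply mul_le_mul_of_nonneg_left h12 (by positivity)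

/-- A compact operator admits no uniformly separated image sequence on the unit ball. -/
lemma no_separated_seq_of_compact {K : X →L[ℂ] X} (hK : IsCompactOperator ⇑K)
    (z : ℕ → X) (hb : ∀ n, ‖z n‖ ≤ 1)
    (hsep : ∀ m n, m < n → 1 / 2 ≤ ‖K (z n) - K (z m)‖) : False := by
  have hcpt := hK.isCompact_closure_image_closedBall 1
  have hmem : ∀ n, K (z n) ∈ closure (⇑K '' closedBall 0 1) := fun n =>
    subset_closure ⟨z n, by simp [Metric.mem_closedBall, dist_eq_norm, hb n], rfl⟩
  obtain ⟨y, _, φ, hφ, hconv⟩ := hcpt.tendsto_subseq hmem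
  have hcauchy : CauchySeq ((fun n => K (z n)) ∘ φ) := hconv.cauchySeq
  obtain ⟨N, hN⟩ := Metric.cauchySeq_iff.mp hcauchy (1/2) (by norm_num)
  have h1 := hN (N+1) (by omega) N (le_refl N)
  have h2 := hsep (φ N) (φ (N+1)) (hφ (by omega))
  simp only [Function.comp_apply, dist_eq_norm] at h1
  linarith

/-- Finite ascent. -/
lemma exists_ker_stable {K : X →L[ℂ] X} (hK : IsCompactOperator ⇑K) :
    ∃ n : ℕ, LinearMap.ker (((1 + K) ^ (n+1) : X →L[ℂ] X) : X →ₗ[ℂ] X) = LinearMap.ker (((1 + K) ^ n : X →L[ℂ] X) : X →ₗ[ℂ] X) := by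
  by_contra hcon
  push_neg at hcon
  set T := (1 + K : X →L[ℂ] X) with hT
  have hmono : ∀ a b : ℕ, a ≤ b → LinearMap.ker ((T ^ a : X →L[ℂ] X) : X →ₗ[ℂ] X) ≤ LinearMap.ker ((T ^ b : X →L[ℂ] X) : X →ₗ[ℂ] X) := by
    intro a b hab x hx
    obtain ⟨k, rfl⟩ := Nat.exists_eq_add_of_le hab
    rw [LinearMap.mem_ker, ContinuousLinearMap.coe_coe] at hx ⊢
    rw [add_comm, pow_add, ContinuousLinearMap.mul_apply, hx, map_zero]
  have hlt : ∀ n, LinearMap.ker ((T ^ n : X →L[ℂ] X) : X →ₗ[ℂ] X) < LinearMap.ker ((T ^ (n+1) : X →L[ℂ] X) : X →ₗ[ℂ] X) :=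
    fun n => lt_of_le_of_ne (hmono n (n+1) (by omega)) (fun h => hcon n h.symm)
  have hstep : ∀ n : ℕ, ∃ z : X, z ∈ LinearMap.ker ((T ^ (n+1) : X →L[ℂ] X) : X →ₗ[ℂ] X) ∧ ‖z‖ = 1 ∧
      ∀ y ∈ LinearMap.ker ((T ^ n : X →L[ℂ] X) : X →ₗ[ℂ] X), 1 / 2 ≤ ‖z - y‖ := by
    intro n
    apply exists_norm_one_half_dist (hmono n (n+1) (by omega))
      (ContinuousLinearMap.isClosed_ker (T ^ n))
    obtain ⟨x, hxQ, hxn⟩ := SetLike.exists_of_lt (hlt n)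
    exact ⟨x, hxQ, hxn⟩
  choose z hzker hz1 hzdist using hstep
  apply no_separated_seq_of_compact hK z (fun n => (hz1 n).le)
  intro m n hmn
  have hKz : ∀ j, K (z j) = T (z j) - z j := by
    intro j
    rw [hT]
    simp
  have heq : K (z n) - K (z m) = -(z n - (T (z n) - T (z m) + z m)) := by
    rw [hKz n, hKz m]
    abel
  rw [heq, norm_neg]
  apply hzdist n
  have h1 : T (z n) ∈ LinearMap.ker ((T ^ n : X →L[ℂ] X) : X →ₗ[ℂ] X) := by
    rw [LinearMap.mem_ker, ContinuousLinearMap.coe_coe, ← ContinuousLinearMap.mul_apply, ← pow_succ]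
    exact hzker n
  have h2 : T (z m) ∈ LinearMap.ker ((T ^ n : X →L[ℂ] X) : X →ₗ[ℂ] X) := by
    apply hmono m n (by omega)
    rw [LinearMap.mem_ker, ContinuousLinearMap.coe_coe, ← ContinuousLinearMap.mul_apply, ← pow_succ]
    exact hzker m
  have h3 : z m ∈ LinearMap.ker ((T ^ n : X →L[ℂ] X) : X →ₗ[ℂ] X) := hmono (m+1) n (by omega) (hzker m)
  exact Submodule.add_mem _ (Submodule.sub_mem _ h1 h2) h3

/-- Finite descent. -/
lemma exists_range_stable [CompleteSpace X] {K : X →L[ℂ] X} (hK : IsCompactOperator ⇑K) :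
    ∃ n : ℕ, LinearMap.range (((1 + K) ^ (n+1) : X →L[ℂ] X) : X →ₗ[ℂ] X) = LinearMap.range (((1 + K) ^ n : X →L[ℂ] X) : X →ₗ[ℂ] X) := by
  by_contra hcon
  push_neg at hcon
  set T := (1 + K : X →L[ℂ] X) with hT
  have hmono : ∀ a b : ℕ, a ≤ b → LinearMap.range ((T ^ b : X →L[ℂ] X) : X →ₗ[ℂ] X) ≤ LinearMap.range ((T ^ a : X →L[ℂ] X) : X →ₗ[ℂ] X) := by
    intro a b hab x hx
    obtain ⟨k, rfl⟩ := Nat.exists_eq_add_of_le hab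
    obtain ⟨v, rfl⟩ := hx
    rw [pow_add, ContinuousLinearMap.coe_coe, ContinuousLinearMap.mul_apply]
    exact ⟨(T ^ k) v, rfl⟩
  have hclosed : ∀ n : ℕ, IsClosed ((LinearMap.range ((T ^ n : X →L[ℂ] X) : X →ₗ[ℂ] X) : Submodule ℂ X) : Set X) := by
    intro n
    obtain ⟨C, hC, hCeq⟩ := pow_one_add_compact hK n
    rw [hT, hCeq]
    exact range_closed_of_compact hC
  have hlt : ∀ n, LinearMap.range ((T ^ (n+1) : X →L[ℂ] X) : X →ₗ[ℂ] X) < LinearMap.range ((T ^ n : X →L[ℂ] X) : X →ₗ[ℂ] X) :=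
    fun n => lt_of_le_of_ne (hmono n (n+1) (by omega)) (hcon n)
  have hstep : ∀ n : ℕ, ∃ z : X, z ∈ LinearMap.range ((T ^ n : X →L[ℂ] X) : X →ₗ[ℂ] X) ∧ ‖z‖ = 1 ∧
      ∀ y ∈ LinearMap.range ((T ^ (n+1) : X →L[ℂ] X) : X →ₗ[ℂ] X), 1 / 2 ≤ ‖z - y‖ := by
    intro n
    apply exists_norm_one_half_dist (hmono n (n+1) (by omega)) (hclosed (n+1))
    obtain ⟨x, hxQ, hxn⟩ := SetLike.exists_of_lt (hlt n)
    exact ⟨x, hxQ, hxn⟩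
  choose z hzran hz1 hzdist using hstep
  apply no_separated_seq_of_compact hK (fun n => z (n + 1)) (fun n => (hz1 (n+1)).le)
  intro m n hmn
  have hKz : ∀ j, K (z j) = T (z j) - z j := by
    intro j
    rw [hT]
    simp
  have heq : K (z (n+1)) - K (z (m+1))
      = z (m+1) - (T (z (m+1)) - T (z (n+1)) + z (n+1)) := by
    rw [hKz (n+1), hKz (m+1)]
    abel
  rw [heq]
  apply hzdist (m+1)
  have hTz : ∀ j, T (z j) ∈ LinearMap.range ((T ^ (j+1) : X →L[ℂ] X) : X →ₗ[ℂ] X) := by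
    intro j
    obtain ⟨v, hv⟩ := hzran j
    exact ⟨v, by rw [pow_succ', ContinuousLinearMap.coe_coe, ContinuousLinearMap.mul_apply, ← ContinuousLinearMap.coe_coe (T ^ j), hv]⟩
  have h1 : T (z (m+1)) ∈ LinearMap.range ((T ^ (m+2) : X →L[ℂ] X) : X →ₗ[ℂ] X) := hTz (m+1)
  have h2 : T (z (n+1)) ∈ LinearMap.range ((T ^ (m+2) : X →L[ℂ] X) : X →ₗ[ℂ] X) :=
    hmono (m+2) (n+2) (by omega) (hTz (n+1))
  have h3 : z (n+1) ∈ LinearMap.range ((T ^ (m+2) : X →L[ℂ] X) : X →ₗ[ℂ] X) :=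
    hmono (m+2) (n+1) (by omega) (hzran (n+1))
  exact Submodule.add_mem _ (Submodule.sub_mem _ h1 h2) h3

lemma ker_pow_mono (T : X →L[ℂ] X) {a b : ℕ} (hab : a ≤ b) :
    LinearMap.ker ((T ^ a : X →L[ℂ] X) : X →ₗ[ℂ] X) ≤ LinearMap.ker ((T ^ b : X →L[ℂ] X) : X →ₗ[ℂ] X) := by
  intro x hx
  obtain ⟨k, rfl⟩ := Nat.exists_eq_add_of_le hab
  rw [LinearMap.mem_ker, ContinuousLinearMap.coe_coe] at hx ⊢
  rw [add_comm, pow_add, ContinuousLinearMap.mul_apply, hx, map_zero]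

lemma range_pow_anti (T : X →L[ℂ] X) {a b : ℕ} (hab : a ≤ b) :
    LinearMap.range ((T ^ b : X →L[ℂ] X) : X →ₗ[ℂ] X) ≤ LinearMap.range ((T ^ a : X →L[ℂ] X) : X →ₗ[ℂ] X) := by
  rintro x ⟨v, rfl⟩
  obtain ⟨k, rfl⟩ := Nat.exists_eq_add_of_le hab
  rw [pow_add, ContinuousLinearMap.coe_coe, ContinuousLinearMap.mul_apply]
  exact ⟨(T ^ k) v, rfl⟩

lemma ker_stab_add {T : X →L[ℂ] X} {n : ℕ}
    (h : LinearMap.ker ((T ^ (n+1) : X →L[ℂ] X) : X →ₗ[ℂ] X) = LinearMap.ker ((T ^ n : X →L[ℂ] X) : X →ₗ[ℂ] X)) (j : ℕ) :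
    LinearMap.ker ((T ^ (n + j) : X →L[ℂ] X) : X →ₗ[ℂ] X) = LinearMap.ker ((T ^ n : X →L[ℂ] X) : X →ₗ[ℂ] X) := by
  induction j with
  | zero => rfl
  | succ j ih =>
    apply le_antisymm
    · intro x hx
      rw [LinearMap.mem_ker, show n + (j+1) = (n+1) + j by omega, pow_add,
        ContinuousLinearMap.coe_coe, ContinuousLinearMap.mul_apply] at hx
      have h1 : (T ^ j) x ∈ LinearMap.ker ((T ^ (n+1) : X →L[ℂ] X) : X →ₗ[ℂ] X) := hx
      rw [h] at h1
      have h2 : x ∈ LinearMap.ker ((T ^ (n + j) : X →L[ℂ] X) : X →ₗ[ℂ] X) := by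
        rw [LinearMap.mem_ker, pow_add, ContinuousLinearMap.coe_coe, ContinuousLinearMap.mul_apply]
        exact h1
      rw [ih] at h2
      exact h2
    · rw [← ih]
      exact ker_pow_mono T (by omega)

lemma range_stab_add {T : X →L[ℂ] X} {n : ℕ}
    (h : LinearMap.range ((T ^ (n+1) : X →L[ℂ] X) : X →ₗ[ℂ] X) = LinearMap.range ((T ^ n : X →L[ℂ] X) : X →ₗ[ℂ] X)) (j : ℕ) :
    LinearMap.range ((T ^ (n + j) : X →L[ℂ] X) : X →ₗ[ℂ] X) = LinearMap.range ((T ^ n : X →L[ℂ] X) : X →ₗ[ℂ] X) := by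
  induction j with
  | zero => rfl
  | succ j ih =>
    apply le_antisymm
    · exact range_pow_anti T (by omega)
    · intro y hy
      rw [← ih] at hy
      obtain ⟨w, rfl⟩ := hy
      have h1 : (T ^ n) w ∈ LinearMap.range ((T ^ (n+1) : X →L[ℂ] X) : X →ₗ[ℂ] X) := by
        rw [h]
        exact ⟨w, rfl⟩
      obtain ⟨u, hu⟩ := h1
      refine ⟨u, ?_⟩
      have e1 : (T ^ (n + (j+1))) = T ^ j * T ^ (n+1) := by
        rw [← pow_add]
        congr 1
        omega
      have e2 : (T ^ (n + j)) = T ^ j * T ^ n := by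
        rw [← pow_add]
        congr 1
        omega
      simp only [ContinuousLinearMap.coe_coe] at hu ⊢
      rw [e1, ContinuousLinearMap.mul_apply, hu, ← ContinuousLinearMap.mul_apply, ← e2]

/-- Main construction: a compact correction making `1 + K` bijective while moving
subspace images only by a fixed finite-dimensional error. -/
lemma main_construction [CompleteSpace X] {K : X →L[ℂ] X} (hK : IsCompactOperator ⇑K) :
    ∃ K₁ : X →L[ℂ] X, IsCompactOperator ⇑K₁ ∧
      Function.Bijective ⇑(1 + K₁ : X →L[ℂ] X) ∧
      ∃ G : Submodule ℂ X, FiniteDimensional ℂ G ∧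
        (∀ M : Submodule ℂ X,
          Submodule.map ((1 + K₁ : X →L[ℂ] X) : X →ₗ[ℂ] X) M ≤ Submodule.map ((1 + K : X →L[ℂ] X) : X →ₗ[ℂ] X) M ⊔ G) ∧
        (∀ M : Submodule ℂ X,
          Submodule.map ((1 + K : X →L[ℂ] X) : X →ₗ[ℂ] X) M ≤ Submodule.map ((1 + K₁ : X →L[ℂ] X) : X →ₗ[ℂ] X) M ⊔ G) := by
  set T := (1 + K : X →L[ℂ] X) with hT
  obtain ⟨n₁, hn₁⟩ := exists_ker_stable hK
  obtain ⟨n₂, hn₂⟩ := exists_range_stable hK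
  set n₀ := max n₁ n₂ + 1 with hn₀
  have hker_st : ∀ k, n₁ ≤ k → LinearMap.ker ((T ^ k : X →L[ℂ] X) : X →ₗ[ℂ] X) = LinearMap.ker ((T ^ n₁ : X →L[ℂ] X) : X →ₗ[ℂ] X) := by
    intro k hk
    obtain ⟨j, rfl⟩ := Nat.exists_eq_add_of_le hk
    exact ker_stab_add hn₁ j
  have hran_st : ∀ k, n₂ ≤ k → LinearMap.range ((T ^ k : X →L[ℂ] X) : X →ₗ[ℂ] X) = LinearMap.range ((T ^ n₂ : X →L[ℂ] X) : X →ₗ[ℂ] X) := by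
    intro k hk
    obtain ⟨j, rfl⟩ := Nat.exists_eq_add_of_le hk
    exact range_stab_add hn₂ j
  set Np := LinearMap.ker ((T ^ n₀ : X →L[ℂ] X) : X →ₗ[ℂ] X) with hNp
  set Rp := LinearMap.range ((T ^ n₀ : X →L[ℂ] X) : X →ₗ[ℂ] X) with hRp
  have hkk : LinearMap.ker ((T ^ (n₀ + n₀) : X →L[ℂ] X) : X →ₗ[ℂ] X) = Np := by
    rw [hNp, hker_st (n₀ + n₀) (by omega), hker_st n₀ (by omega)]
  have hrr : LinearMap.range ((T ^ (n₀ + n₀) : X →L[ℂ] X) : X →ₗ[ℂ] X) = Rp := by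
    rw [hRp, hran_st (n₀ + n₀) (by omega), hran_st n₀ (by omega)]
  have hr1 : LinearMap.range ((T ^ (n₀ + 1) : X →L[ℂ] X) : X →ₗ[ℂ] X) = Rp := by
    rw [hRp, hran_st (n₀ + 1) (by omega), hran_st n₀ (by omega)]
  have hNpC : IsClosed (Np : Set X) := ContinuousLinearMap.isClosed_ker _
  obtain ⟨Cn, hCn, hCneq⟩ := pow_one_add_compact hK n₀
  have hRpC : IsClosed (Rp : Set X) := by
    rw [hRp, hT, hCneq]
    exact range_closed_of_compact hCn
  haveI hNpFD : FiniteDimensional ℂ ↥Np := by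
    rw [hNp, hT, hCneq]
    exact ker_fd_of_compact hCn
  -- T maps Rp onto Rp
  have hTRp : ∀ v ∈ Rp, T v ∈ Rp := by
    rintro v ⟨w, rfl⟩
    rw [← hr1]
    exact ⟨w, by simp only [ContinuousLinearMap.coe_coe]; rw [pow_succ', ContinuousLinearMap.mul_apply]⟩
  -- disjointness
  have hdis : Np ⊓ Rp = ⊥ := by
    rw [eq_bot_iff]
    rintro x ⟨hx1, w, rfl⟩
    have h1 : w ∈ LinearMap.ker ((T ^ (n₀ + n₀) : X →L[ℂ] X) : X →ₗ[ℂ] X) := by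
      rw [LinearMap.mem_ker, pow_add, ContinuousLinearMap.coe_coe, ContinuousLinearMap.mul_apply]
      exact hx1
    rw [hkk] at h1
    rw [Submodule.mem_bot]
    exact h1
  have hcod : Np ⊔ Rp = ⊤ := by
    rw [eq_top_iff]
    intro x _
    have h1 : (T ^ n₀) x ∈ LinearMap.range ((T ^ (n₀ + n₀) : X →L[ℂ] X) : X →ₗ[ℂ] X) := by
      rw [hrr]
      exact ⟨x, rfl⟩
    obtain ⟨y, hy⟩ := h1
    rw [pow_add, ContinuousLinearMap.coe_coe, ContinuousLinearMap.mul_apply] at hy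
    refine Submodule.mem_sup.mpr ⟨x - (T ^ n₀) y, ?_, (T ^ n₀) y, ⟨y, rfl⟩, by abel⟩
    rw [hNp, LinearMap.mem_ker, ContinuousLinearMap.coe_coe, map_sub, hy, sub_self]
  have hcompl : IsCompl Np Rp := ⟨disjoint_iff.mpr hdis, codisjoint_iff.mpr hcod⟩
  set π₀ := Np.linearProjOfClosedCompl Rp hcompl hNpC hRpC with hπ₀
  set π := Np.subtypeL.comp π₀ with hπ
  have hπNp : ∀ x, π x ∈ Np := fun x => (π₀ x).2
  have hπleft : ∀ x, x ∈ Np → π x = x := by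
    intro x hx
    have : π₀ x = ⟨x, hx⟩ := by
      rw [hπ₀]
      have := Submodule.linearProjOfIsCompl_apply_left hcompl ⟨x, hx⟩
      rw [Submodule.coe_continuous_linearProjOfClosedCompl'] at *
      exact this
    rw [hπ, ContinuousLinearMap.comp_apply, this]
    rfl
  have hπright : ∀ x, x ∈ Rp → π x = 0 := by
    intro x hx
    have : π₀ x = 0 := by
      rw [hπ₀]
      have := Submodule.linearProjOfIsCompl_apply_right hcompl ⟨x, hx⟩
      rw [Submodule.coe_continuous_linearProjOfClosedCompl'] at *
      exact this
    rw [hπ, ContinuousLinearMap.comp_apply, this]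
    rfl
  have hπsub : ∀ x, x - π x ∈ Rp := by
    intro x
    have hx : x ∈ Np ⊔ Rp := by rw [hcod]; trivial
    obtain ⟨u, hu, v, hv, rfl⟩ := mem_sup.mp hx
    have : π (u + v) = u := by
      rw [map_add, hπleft u hu, hπright v hv, add_zero]
    rw [this]
    simpa using hv
  set K₁ := K - K.comp π with hK₁
  have hK₁c : IsCompactOperator ⇑K₁ := by
    have h1 : IsCompactOperator (⇑K ∘ ⇑π) := hK.comp_clm π
    have h2 : IsCompactOperator (⇑K - ⇑K ∘ ⇑π) := hK.sub h1
    have h3 : ⇑K₁ = ⇑K - ⇑K ∘ ⇑π := by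
      ext x
      simp [hK₁]
    rw [h3]
    exact h2
  set S := (1 + K₁ : X →L[ℂ] X) with hS
  have hSTdiff : ∀ x, S x = T x - K (π x) := by
    intro x
    simp [hS, hK₁, hT]
    abel
  have hSdec : ∀ x, S x = T (x - π x) + π x := by
    intro x
    rw [hSTdiff x]
    rw [hT]
    simp
    abel
  have hinj0 : ∀ x, S x = 0 → x = 0 := by
    intro x hx
    rw [hSdec] at hx
    have hu : π x = -(T (x - π x)) := eq_neg_of_add_eq_zero_right hx
    have hTv : T (x - π x) ∈ Rp := hTRp _ (hπsub x)
    have hu2 : π x ∈ Np ⊓ Rp := ⟨hπNp x, by rw [hu]; exact Rp.neg_mem hTv⟩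
    rw [hdis, Submodule.mem_bot] at hu2
    rw [hu2, add_zero, sub_zero] at hx
    have hv : x ∈ Np := by
      apply ker_pow_mono T (show 1 ≤ n₀ by omega)
      rw [LinearMap.mem_ker, pow_one]
      exact hx
    have hxRp : x ∈ Rp := by
      have h := hπsub x
      rwa [hu2, sub_zero] at h
    have hv2 : x ∈ Np ⊓ Rp := ⟨hv, hxRp⟩
    rw [hdis, Submodule.mem_bot] at hv2
    exact hv2
  have hinj : Function.Injective ⇑S := by
    intro a b hab
    have : S (a - b) = 0 := by rw [map_sub, hab, sub_self]
    have := hinj0 _ this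
    exact sub_eq_zero.mp this
  have hsurj : Function.Surjective ⇑S := by
    intro z
    have hz : z ∈ Np ⊔ Rp := by rw [hcod]; trivial
    obtain ⟨u, hu, v, hv, rfl⟩ := mem_sup.mp hz
    rw [← hr1] at hv
    obtain ⟨w, hw⟩ := hv
    refine ⟨u + (T ^ n₀) w, ?_⟩
    have hp : (T ^ n₀) w ∈ Rp := ⟨w, rfl⟩
    have hπx : π (u + (T ^ n₀) w) = u := by
      rw [map_add, hπleft u hu, hπright _ hp, add_zero]
    rw [hSdec, hπx]
    have : u + (T ^ n₀) w - u = (T ^ n₀) w := by abel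
    rw [this]
    have e : T ^ (n₀ + 1) = T * T ^ n₀ := pow_succ' T n₀
    rw [e, ContinuousLinearMap.coe_coe, ContinuousLinearMap.mul_apply] at hw
    rw [hw]
    abel
  refine ⟨K₁, hK₁c, ⟨hinj, hsurj⟩, Submodule.map (K : X →ₗ[ℂ] X) Np, ?_, ?_, ?_⟩
  · have h1 : Module.Finite ℂ ↥(Submodule.map (K : X →ₗ[ℂ] X) Np) :=
      Module.Finite.map Np (K : X →ₗ[ℂ] X)
    have h2 : Submodule.map (K : X →ₗ[ℂ] X) Np = Submodule.map (K : X →ₗ[ℂ] X) Np := by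
      ext x
      simp
    rwa [h2] at h1
  · intro M
    rintro _ ⟨x, hxM, rfl⟩
    rw [ContinuousLinearMap.coe_coe, hSTdiff x]
    apply Submodule.sub_mem
    · exact mem_sup_left ⟨x, hxM, rfl⟩
    · exact mem_sup_right ⟨π x, hπNp x, rfl⟩
  · intro M
    rintro _ ⟨x, hxM, rfl⟩
    have : T x = S x + K (π x) := by
      rw [hSTdiff x]
      abel
    rw [ContinuousLinearMap.coe_coe, this]
    apply Submodule.add_mem
    · exact mem_sup_left ⟨x, hxM, rfl⟩
    · exact mem_sup_right ⟨π x, hπNp x, rfl⟩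

end AuxRiesz



/-- Normal form for a right semi-compact perturbation: there
are a compact `K₁` with `I + K₁` invertible and finite dimensional subspaces
`V ≤ (I+K₁)M`, `U ≤ N` with `U ∩ (I+K₁)M = 0`, `V ∩ N = 0` such that
`(I+K₁)M ⊕ U = N ⊕ V` when `[M−N] ∈ ℤ`, while `(I+K₁)M ⊕ U ⊆ N ⊕ V` with
`dim U = dim V + m` when `[M−N] = −∞`. -/
theorem scPerturb_normal_form {X : Type*} [NormedAddCommGroup X]
    [NormedSpace ℂ X] [CompleteSpace X] (M N : Submodule ℂ X)
    (hMc : IsClosed (M : Set X)) (hNc : IsClosed (N : Set X))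
    (hMN : SCPerturb M N) (m : ℕ) (hm : 0 < m) :
    ∃ K₁ : X →L[ℂ] X, IsCompactOperator ⇑K₁ ∧
      Function.Bijective ⇑(1 + K₁ : X →L[ℂ] X) ∧
      ∃ V U : Submodule ℂ X,
        FiniteDimensional ℂ V ∧ FiniteDimensional ℂ U ∧
        V ≤ Submodule.map ((1 + K₁ : X →L[ℂ] X) : X →ₗ[ℂ] X) M ∧ U ≤ N ∧
        U ⊓ Submodule.map ((1 + K₁ : X →L[ℂ] X) : X →ₗ[ℂ] X) M = ⊥ ∧ V ⊓ N = ⊥ ∧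
        ((∃ n : ℤ, relDim M N = ((n : ℝ) : EReal)) →
          Submodule.map ((1 + K₁ : X →L[ℂ] X) : X →ₗ[ℂ] X) M ⊔ U = N ⊔ V) ∧
        (relDim M N = ⊥ →
          Submodule.map ((1 + K₁ : X →L[ℂ] X) : X →ₗ[ℂ] X) M ⊔ U ≤ N ⊔ V ∧
          Module.finrank ℂ U = Module.finrank ℂ V + m) := by
  classical
  obtain ⟨hKc, hKle⟩ := hMN.choose_spec
  set K := hMN.choose with hKdef
  have hrd : relDim M N = relIndexWith M N K := by
    unfold relDim
    rw [dif_pos hMN]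
  obtain ⟨K₁, hK₁c, hbij, G, hGfd, hle1, hle2⟩ := main_construction hKc
  set A := Submodule.map ((1 + K₁ : X →L[ℂ] X) : X →ₗ[ℂ] X) M with hA
  set D₀ := Submodule.map ((1 + K : X →L[ℂ] X) : X →ₗ[ℂ] X) M with hD₀
  have hAT : A ≤ D₀ ⊔ G := hle1 M
  have hTA : D₀ ≤ A ⊔ G := hle2 M
  have hAle : A ≤ N ⊔ G := hAT.trans (sup_le_sup_right hKle G)
  haveI hVq : FiniteDimensional ℂ (↥A ⧸ (N ⊓ A).comap A.subtype) := quot_inf_fd hAle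
  obtain ⟨V, hVA, hVfd, hVsup, hVdisj⟩ :=
    exists_compl_of_quot_fd (D := N ⊓ A) (B := A) inf_le_right
  have hVN : V ⊓ N = ⊥ := by
    rw [eq_bot_iff]
    rintro x ⟨hxV, hxN⟩
    have : x ∈ V ⊓ (N ⊓ A) := ⟨hxV, hxN, hVA hxV⟩
    rw [hVdisj] at this
    exact this
  have hANV : A ≤ N ⊔ V := by
    rw [← hVsup]
    exact sup_le_sup_right inf_le_left V
  by_cases hq : FiniteDimensional ℂ (↥N ⧸ (Submodule.map ((1 + K : X →L[ℂ] X) : X →ₗ[ℂ] X) M).comap N.subtype)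
  · -- finite relative codimension
    haveI := hq
    obtain ⟨U₀, hU₀N, hU₀fd, hU₀sup, _⟩ := exists_compl_of_quot_fd (D := D₀) (B := N) hKle
    have hNle : N ≤ A ⊔ (G ⊔ U₀) := by
      calc N = D₀ ⊔ U₀ := hU₀sup.symm
        _ ≤ (A ⊔ G) ⊔ U₀ := sup_le_sup_right hTA U₀
        _ = A ⊔ (G ⊔ U₀) := sup_assoc A G U₀
    haveI : FiniteDimensional ℂ (↥N ⧸ (A ⊓ N).comap N.subtype) := quot_inf_fd hNle
    obtain ⟨U, hUN, hUfd, hUsup, hUdisj⟩ :=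
      exists_compl_of_quot_fd (D := A ⊓ N) (B := N) inf_le_right
    have hUA : U ⊓ A = ⊥ := by
      rw [eq_bot_iff]
      rintro x ⟨hxU, hxA⟩
      have : x ∈ U ⊓ (A ⊓ N) := ⟨hxU, hxA, hUN hxU⟩
      rw [hUdisj] at this
      exact this
    have hfin_eq : A ⊔ U = N ⊔ V := by
      have e1 : A ⊔ (A ⊓ N) = A := sup_eq_left.mpr inf_le_left
      have e2 : N ⊔ (N ⊓ A) = N := sup_eq_left.mpr inf_le_left
      have h1 : A ⊔ N = A ⊔ U := by
        rw [← hUsup, ← sup_assoc, e1]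
      have h2 : N ⊔ A = N ⊔ V := by
        rw [← hVsup, ← sup_assoc, e2]
      rw [← h1, sup_comm A N, h2]
    have hne_bot : relDim M N ≠ ⊥ := by
      rw [hrd]
      unfold relIndexWith edimE
      rw [if_pos hq]
      by_cases hk : FiniteDimensional ℂ ↥(M ⊓ LinearMap.ker ((1 + K : X →L[ℂ] X) : X →ₗ[ℂ] X))
      · rw [if_pos hk, ← EReal.coe_sub]
        exact EReal.coe_ne_bot _
      · rw [if_neg hk, EReal.top_sub_coe]
        exact bot_lt_top.ne'
    exact ⟨K₁, hK₁c, hbij, V, U, hVfd, hUfd, hVA, hUN, hUA, hVN,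
      fun _ => hfin_eq, fun hbot => absurd hbot hne_bot⟩
  · -- infinite relative codimension
    have hrel_bot : relDim M N = ⊥ := by
      rw [hrd]
      unfold relIndexWith edimE
      rw [if_neg hq, EReal.sub_top]
    have hnot : ¬ FiniteDimensional ℂ (↥N ⧸ (A ⊓ N).comap N.subtype) := by
      intro hfin
      haveI := hfin
      obtain ⟨U₁, hU₁N, hU₁fd, hU₁sup, _⟩ :=
        exists_compl_of_quot_fd (D := A ⊓ N) (B := N) inf_le_right
      have hNle : N ≤ D₀ ⊔ (G ⊔ U₁) := by
        calc N = (A ⊓ N) ⊔ U₁ := hU₁sup.symm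
          _ ≤ A ⊔ U₁ := sup_le_sup_right inf_le_left U₁
          _ ≤ (D₀ ⊔ G) ⊔ U₁ := sup_le_sup_right hAT U₁
          _ = D₀ ⊔ (G ⊔ U₁) := sup_assoc D₀ G U₁
      exact hq (quot_fd_of_le_sup hKle hNle)
    obtain ⟨U, hUN, hUfd, hUdisj, hUrank⟩ :=
      exists_findim_transverse inf_le_right hnot (Module.finrank ℂ V + m)
    have hUA : U ⊓ A = ⊥ := by
      rw [eq_bot_iff]
      rintro x ⟨hxU, hxA⟩
      have : x ∈ U ⊓ (A ⊓ N) := ⟨hxU, hxA, hUN hxU⟩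
      rw [hUdisj] at this
      exact this
    refine ⟨K₁, hK₁c, hbij, V, U, hVfd, hUfd, hVA, hUN, hUA, hVN, ?_, ?_⟩
    · rintro ⟨n, hn⟩
      rw [hrel_bot] at hn
      exact absurd hn.symm (EReal.coe_ne_bot _)
    · intro _
      exact ⟨sup_le hANV (hUN.trans le_sup_left), hUrank⟩
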